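/- For every real s > 1, the Clausen function C_s(x) = ∑_{n=1}^{∞} cos(n x)/n^s is nonincreasing in x on the interval [0, π]: if 0 ≤ x₁ ≤ x₂ ≤ π then C_s(x₂) ≤ C_s(x₁). -/

import Mathlib

open MeasureTheory Set

/-- The Poisson-type kernel: closed form of `∑ r^(n+1) cos((n+1)x)` with `c = cos x`. -/
noncomputable def clausenP (r c : ℝ) : ℝ := (r * c - r ^ 2) / (1 - 2 * r * c + r ^ 2)

lemma clausenP_denom_pos {r c : ℝ} (h0 : 0 ≤ r) (h1 : r < 1) (hb2 : c ≤ 1) :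
    0 < 1 - 2 * r * c + r ^ 2 := by
  nlinarith [mul_nonneg h0 (sub_nonneg.2 hb2), sq_nonneg (1 - r)]

lemma clausen_hasSumP (r x : ℝ) (h0 : 0 ≤ r) (h1 : r < 1) :
    HasSum (fun n : ℕ => r ^ (n + 1) * Real.cos (((n : ℝ) + 1) * x))
      (clausenP r (Real.cos x)) := by
  set z : ℂ := (r : ℂ) * Complex.exp (x * Complex.I) with hz_def
  have hznorm : ‖z‖ < 1 := by
    rw [hz_def, norm_mul, Complex.norm_real,
      Complex.norm_exp]
    simpa [abs_of_nonneg h0] using h1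
  have hgeo : HasSum (fun n : ℕ => z ^ (n + 1)) (z * (1 - z)⁻¹) := by
    have := (hasSum_geometric_of_norm_lt_one hznorm).mul_left z
    simpa [pow_succ'] using this
  have h2 := Complex.hasSum_re hgeo
  have hterm : ∀ n : ℕ, (z ^ (n + 1)).re = r ^ (n + 1) * Real.cos (((n : ℝ) + 1) * x) := by
    intro n
    have hzpow : z ^ (n + 1) =
        ((r ^ (n + 1) : ℝ) : ℂ) * Complex.exp ((((n : ℝ) + 1) * x : ℝ) * Complex.I) := by
      rw [hz_def, mul_pow, ← Complex.exp_nat_mul]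
      push_cast
      ring_nf
    rw [hzpow, Complex.re_ofReal_mul, Complex.exp_ofReal_mul_I_re]
  have hval : (z * (1 - z)⁻¹).re = clausenP r (Real.cos x) := by
    have hre : z.re = r * Real.cos x := by
      rw [hz_def, Complex.re_ofReal_mul, Complex.exp_ofReal_mul_I_re]
    have him : z.im = r * Real.sin x := by
      rw [hz_def, Complex.im_ofReal_mul, Complex.exp_ofReal_mul_I_im]
    have hpyth : Real.sin x ^ 2 + Real.cos x ^ 2 = 1 := Real.sin_sq_add_cos_sq x
    have hD : 0 < 1 - 2 * r * Real.cos x + r ^ 2 :=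
      clausenP_denom_pos h0 h1 (Real.cos_le_one x)
    rw [← div_eq_mul_inv, Complex.div_re, Complex.normSq_apply, Complex.sub_re,
      Complex.sub_im, Complex.one_re, Complex.one_im, hre, him, clausenP]
    have hN : (1 - r * Real.cos x) * (1 - r * Real.cos x) +
        (0 - r * Real.sin x) * (0 - r * Real.sin x) = 1 - 2 * r * Real.cos x + r ^ 2 := by
      nlinarith [hpyth]
    rw [hN]
    field_simp
    congr 1
    linear_combination (-r ^ 2) * hpyth
  rw [hval] at h2
  simpa only [hterm] using h2

lemma clausenP_mono {r c₁ c₂ : ℝ} (h0 : 0 ≤ r) (h1 : r < 1)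
    (hb1 : -1 ≤ c₂) (hb2 : c₁ ≤ 1) (hc : c₂ ≤ c₁) : clausenP r c₂ ≤ clausenP r c₁ := by
  have hd1 : 0 < 1 - 2 * r * c₁ + r ^ 2 := clausenP_denom_pos h0 h1 hb2
  have hd2 : 0 < 1 - 2 * r * c₂ + r ^ 2 := clausenP_denom_pos h0 h1 (hc.trans hb2)
  rw [clausenP, clausenP, div_le_div_iff₀ hd2 hd1]
  nlinarith [mul_nonneg (mul_nonneg h0 (by nlinarith : (0:ℝ) ≤ 1 - r ^ 2))
      (sub_nonneg.2 hc)]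

lemma clausenP_abs_le {r c : ℝ} (h0 : 0 ≤ r) (h1 : r < 1) (hb1 : -1 ≤ c) (hb2 : c ≤ 1) :
    |clausenP r c| ≤ r / (1 - r) := by
  have hd : 0 < 1 - 2 * r * c + r ^ 2 := clausenP_denom_pos h0 h1 hb2
  have h1r : 0 < 1 - r := by linarith
  rw [abs_le]
  constructor
  · rw [clausenP, neg_le, ← neg_div, div_le_div_iff₀ hd h1r]
    nlinarith [mul_nonneg (by linarith : (0:ℝ) ≤ 1 + c) (sq_nonneg (1 - r)),
      mul_nonneg (mul_nonneg h0 (by linarith : (0:ℝ) ≤ 1 - c)) (by linarith : (0:ℝ) ≤ 1 + r)]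
  · rw [clausenP, div_le_div_iff₀ hd h1r]
    nlinarith [mul_nonneg (mul_nonneg h0 (by linarith : (0:ℝ) ≤ 1 - c)) (by linarith : (0:ℝ) ≤ 1 + r)]

lemma clausen_key_ineq {s t : ℝ} (hs : 1 < s) (ht : 0 < t) :
    t ^ (s - 1) * (Real.exp (-t) / (1 - Real.exp (-t))) ≤
      2 * (t ^ (s - 2) * Real.exp (-(2⁻¹ * t))) := by
  set u := Real.exp (-(2⁻¹ * t)) with hu_def
  have hu : 0 < u := Real.exp_pos _
  have huv : u * Real.exp (2⁻¹ * t) = 1 := by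
    rw [hu_def, ← Real.exp_add]; simp
  have he1 : 1 + 2⁻¹ * t ≤ Real.exp (2⁻¹ * t) := by
    have := Real.add_one_le_exp (2⁻¹ * t); linarith
  have hexpt : Real.exp (-t) = u * u := by
    rw [hu_def, ← Real.exp_add]; ring_nf
  have hu1 : u < 1 := by
    rw [hu_def, Real.exp_lt_one_iff]; linarith
  have h1u : 0 < 1 - Real.exp (-t) := by
    rw [hexpt]; nlinarith
  have htpow : t ^ (s - 1) = t ^ (s - 2) * t := by
    have h : s - 1 = s - 2 + 1 := by ring
    rw [h, Real.rpow_add ht, Real.rpow_one]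
  have hts2 : 0 ≤ t ^ (s - 2) := Real.rpow_nonneg ht.le _
  rw [htpow]
  have hkey : t * (Real.exp (-t) / (1 - Real.exp (-t))) ≤ 2 * u := by
    rw [mul_div_assoc', div_le_iff₀ h1u, hexpt]
    nlinarith [mul_le_mul_of_nonneg_left he1 hu.le, mul_nonneg hu.le (sub_nonneg.2 hu1.le)]
  calc t ^ (s - 2) * t * (Real.exp (-t) / (1 - Real.exp (-t)))
      = t ^ (s - 2) * (t * (Real.exp (-t) / (1 - Real.exp (-t)))) := by ring
    _ ≤ t ^ (s - 2) * (2 * u) := mul_le_mul_of_nonneg_left hkey hts2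
    _ = 2 * (t ^ (s - 2) * u) := by ring

lemma clausen_dominator_integrable {s : ℝ} (hs : 1 < s) :
    IntegrableOn (fun t : ℝ => 2 * (t ^ (s - 2) * Real.exp (-(2⁻¹ * t)))) (Ioi 0) := by
  have h : IntegrableOn (fun t : ℝ => t ^ (s - 2) * Real.exp (-2⁻¹ * t)) (Ioi 0) := by
    have h := integrableOn_rpow_mul_exp_neg_mul_rpow (s := s - 2) (p := 1) (b := 2⁻¹)
      (by linarith) one_pos (by norm_num)
    simpa only [Real.rpow_one] using h
  have h2 : IntegrableOn (fun t : ℝ => 2 * (t ^ (s - 2) * Real.exp (-2⁻¹ * t))) (Ioi 0) :=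
    h.const_mul 2
  exact h2.congr_fun (fun t _ => by ring_nf) measurableSet_Ioi

lemma clausen_cf_measurable {s : ℝ} (hs : 1 < s) :
    Measurable fun t : ℝ => t ^ (s - 1) * (Real.exp (-t) / (1 - Real.exp (-t))) := by
  have he : Measurable fun t : ℝ => Real.exp (-t) :=
    (Real.continuous_exp.comp continuous_neg).measurable
  exact (Real.continuous_rpow_const (by linarith : (0:ℝ) ≤ s - 1)).measurable.mul (he.div (measurable_const.sub he))

lemma clausen_g_measurable {s : ℝ} (hs : 1 < s) (c : ℝ) :
    Measurable fun t : ℝ => t ^ (s - 1) * clausenP (Real.exp (-t)) c := by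
  have he : Measurable fun t : ℝ => Real.exp (-t) :=
    (Real.continuous_exp.comp continuous_neg).measurable
  simp only [clausenP]
  exact (Real.continuous_rpow_const (by linarith : (0:ℝ) ≤ s - 1)).measurable.mul
    (((he.mul measurable_const).sub (he.pow measurable_const)).div
      ((measurable_const.sub ((measurable_const.mul he).mul measurable_const)).add
        (he.pow measurable_const)))

lemma clausen_integrableOn {s : ℝ} (hs : 1 < s) (x : ℝ) :
    IntegrableOn (fun t => t ^ (s - 1) * clausenP (Real.exp (-t)) (Real.cos x)) (Ioi 0) := by
  refine (clausen_dominator_integrable hs).mono'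
    (clausen_g_measurable hs (Real.cos x)).aestronglyMeasurable ?_
  rw [ae_restrict_iff' measurableSet_Ioi]
  refine ae_of_all _ fun t ht => ?_
  have ht0 : (0:ℝ) < t := ht
  have hr0 : 0 ≤ Real.exp (-t) := (Real.exp_pos _).le
  have hr1 : Real.exp (-t) < 1 := by rw [Real.exp_lt_one_iff]; linarith
  have hts : 0 ≤ t ^ (s - 1) := Real.rpow_nonneg ht0.le _
  rw [Real.norm_eq_abs, abs_mul, abs_of_nonneg hts]
  calc t ^ (s - 1) * |clausenP (Real.exp (-t)) (Real.cos x)|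
      ≤ t ^ (s - 1) * (Real.exp (-t) / (1 - Real.exp (-t))) :=
        mul_le_mul_of_nonneg_left
          (clausenP_abs_le hr0 hr1 (Real.neg_one_le_cos x) (Real.cos_le_one x)) hts
    _ ≤ 2 * (t ^ (s - 2) * Real.exp (-(2⁻¹ * t))) := clausen_key_ineq hs ht0

lemma clausen_repr {s : ℝ} (hs : 1 < s) (x : ℝ) :
    HasSum (fun n : ℕ => Real.cos (((n : ℝ) + 1) * x) / ((n : ℝ) + 1) ^ s * Real.Gamma s)
      (∫ t in Ioi 0, t ^ (s - 1) * clausenP (Real.exp (-t)) (Real.cos x)) := by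
  have hc1 : Continuous fun t : ℝ => t ^ (s - 1) :=
    Real.continuous_rpow_const (by linarith)
  have hc2 : Continuous fun t : ℝ => Real.exp (-t) :=
    Real.continuous_exp.comp continuous_neg
  have hmain : HasSum
      (fun n : ℕ => ∫ t in Ioi 0,
        t ^ (s - 1) * (Real.exp (-t) ^ (n + 1) * Real.cos (((n : ℝ) + 1) * x)))
      (∫ t in Ioi 0, t ^ (s - 1) * clausenP (Real.exp (-t)) (Real.cos x)) := by
    refine MeasureTheory.hasSum_integral_of_dominated_convergence
      (fun (n : ℕ) (t : ℝ) => t ^ (s - 1) * Real.exp (-t) ^ (n + 1)) ?_ ?_ ?_ ?_ ?_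
    · intro n
      exact (hc1.mul ((hc2.pow (n + 1)).mul continuous_const)).aestronglyMeasurable
    · intro n
      rw [ae_restrict_iff' measurableSet_Ioi]
      refine ae_of_all _ fun t ht => ?_
      have ht0 : (0:ℝ) < t := ht
      have hts : 0 ≤ t ^ (s - 1) := Real.rpow_nonneg ht0.le _
      have hrp : 0 ≤ Real.exp (-t) ^ (n + 1) := pow_nonneg (Real.exp_pos _).le _
      rw [Real.norm_eq_abs, abs_mul, abs_of_nonneg hts, abs_mul, abs_of_nonneg hrp]
      exact mul_le_mul_of_nonneg_left
        (mul_le_of_le_one_right hrp (Real.abs_cos_le_one _)) hts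
    · rw [ae_restrict_iff' measurableSet_Ioi]
      refine ae_of_all _ fun t ht => ?_
      have ht0 : (0:ℝ) < t := ht
      have hr1 : Real.exp (-t) < 1 := by rw [Real.exp_lt_one_iff]; linarith
      exact ((summable_geometric_of_lt_one (Real.exp_pos _).le hr1).mul_left
        (t ^ (s - 1) * Real.exp (-t))).congr fun n => by ring
    · have hcf : IntegrableOn
          (fun t => t ^ (s - 1) * (Real.exp (-t) / (1 - Real.exp (-t)))) (Ioi 0) := by
        refine (clausen_dominator_integrable hs).mono'
          (clausen_cf_measurable hs).aestronglyMeasurable ?_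
        rw [ae_restrict_iff' measurableSet_Ioi]
        refine ae_of_all _ fun t ht => ?_
        have ht0 : (0:ℝ) < t := ht
        have hr1 : Real.exp (-t) < 1 := by rw [Real.exp_lt_one_iff]; linarith
        have h1r : 0 < 1 - Real.exp (-t) := by linarith
        rw [Real.norm_eq_abs, abs_of_nonneg (mul_nonneg (Real.rpow_nonneg ht0.le _)
          (div_nonneg (Real.exp_pos _).le h1r.le))]
        exact clausen_key_ineq hs ht0
      refine hcf.congr ?_
      rw [Filter.EventuallyEq, ae_restrict_iff' measurableSet_Ioi]
      refine ae_of_all _ fun t ht => ?_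
      have ht0 : (0:ℝ) < t := ht
      have hr0 : (0:ℝ) ≤ Real.exp (-t) := (Real.exp_pos _).le
      have hr1 : Real.exp (-t) < 1 := by rw [Real.exp_lt_one_iff]; linarith
      have hsum : ∑' n : ℕ, Real.exp (-t) ^ (n + 1) =
          Real.exp (-t) * (1 - Real.exp (-t))⁻¹ := by
        calc ∑' n : ℕ, Real.exp (-t) ^ (n + 1)
            = ∑' n : ℕ, Real.exp (-t) * Real.exp (-t) ^ n := by
              exact tsum_congr fun n => by ring
          _ = Real.exp (-t) * ∑' n : ℕ, Real.exp (-t) ^ n := tsum_mul_left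
          _ = Real.exp (-t) * (1 - Real.exp (-t))⁻¹ := by
              rw [tsum_geometric_of_lt_one hr0 hr1]
      rw [tsum_mul_left, hsum, div_eq_mul_inv]
    · rw [ae_restrict_iff' measurableSet_Ioi]
      refine ae_of_all _ fun t ht => ?_
      have ht0 : (0:ℝ) < t := ht
      have hr1 : Real.exp (-t) < 1 := by rw [Real.exp_lt_one_iff]; linarith
      exact (clausen_hasSumP _ x (Real.exp_pos _).le hr1).mul_left _
  have hint : ∀ n : ℕ,
      (∫ t in Ioi 0, t ^ (s - 1) * (Real.exp (-t) ^ (n + 1) * Real.cos (((n : ℝ) + 1) * x)))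
        = Real.cos (((n : ℝ) + 1) * x) / ((n : ℝ) + 1) ^ s * Real.Gamma s := by
    intro n
    have hn : (0:ℝ) < (n : ℝ) + 1 := by positivity
    have h1 : ∀ t : ℝ, Real.exp (-t) ^ (n + 1) = Real.exp (-(((n : ℝ) + 1) * t)) := by
      intro t
      rw [← Real.exp_nat_mul]
      push_cast
      ring_nf
    calc (∫ t in Ioi 0, t ^ (s - 1) * (Real.exp (-t) ^ (n + 1) * Real.cos (((n : ℝ) + 1) * x)))
        = ∫ t in Ioi 0,
            (t ^ (s - 1) * Real.exp (-(((n : ℝ) + 1) * t))) * Real.cos (((n : ℝ) + 1) * x) := by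
          refine setIntegral_congr_fun measurableSet_Ioi fun t _ => ?_
          rw [h1]; ring
      _ = (∫ t in Ioi 0, t ^ (s - 1) * Real.exp (-(((n : ℝ) + 1) * t))) *
            Real.cos (((n : ℝ) + 1) * x) := by
          rw [integral_mul_const]
      _ = ((1 / ((n : ℝ) + 1)) ^ s * Real.Gamma s) * Real.cos (((n : ℝ) + 1) * x) := by
          rw [Real.integral_rpow_mul_exp_neg_mul_Ioi (by linarith) hn]
      _ = Real.cos (((n : ℝ) + 1) * x) / ((n : ℝ) + 1) ^ s * Real.Gamma s := by
          rw [one_div, Real.inv_rpow hn.le]; ring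
  simpa only [hint] using hmain

theorem stmt_11 (s : ℝ) (hs : 1 < s) (x₁ x₂ : ℝ) (h₁ : 0 ≤ x₁) (h₁₂ : x₁ ≤ x₂)
    (h₂ : x₂ ≤ Real.pi) :
    (∑' n : ℕ, Real.cos ((n + 1) * x₂) / ((n : ℝ) + 1) ^ s) ≤
      ∑' n : ℕ, Real.cos ((n + 1) * x₁) / ((n : ℝ) + 1) ^ s := by
  have hG : 0 < Real.Gamma s := Real.Gamma_pos_of_pos (by linarith)
  have hrep1 := clausen_repr hs x₁
  have hrep2 := clausen_repr hs x₂
  have hcos : Real.cos x₂ ≤ Real.cos x₁ :=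
    Real.cos_le_cos_of_nonneg_of_le_pi h₁ h₂ h₁₂
  have hIle : (∫ t in Ioi 0, t ^ (s - 1) * clausenP (Real.exp (-t)) (Real.cos x₂)) ≤
      ∫ t in Ioi 0, t ^ (s - 1) * clausenP (Real.exp (-t)) (Real.cos x₁) := by
    refine setIntegral_mono_on (clausen_integrableOn hs x₂) (clausen_integrableOn hs x₁)
      measurableSet_Ioi fun t ht => ?_
    have ht0 : (0:ℝ) < t := ht
    have hr0 : 0 ≤ Real.exp (-t) := (Real.exp_pos _).le
    have hr1 : Real.exp (-t) < 1 := by rw [Real.exp_lt_one_iff]; linarith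
    exact mul_le_mul_of_nonneg_left
      (clausenP_mono hr0 hr1 (Real.neg_one_le_cos x₂) (Real.cos_le_one x₁) hcos)
      (Real.rpow_nonneg ht0.le _)
  have e1 := hrep1.tsum_eq
  have e2 := hrep2.tsum_eq
  rw [tsum_mul_right] at e1 e2
  have h : (∑' n : ℕ, Real.cos ((n + 1) * x₂) / ((n : ℝ) + 1) ^ s) * Real.Gamma s ≤
      (∑' n : ℕ, Real.cos ((n + 1) * x₁) / ((n : ℝ) + 1) ^ s) * Real.Gamma s := by
    rw [e1, e2]; exact hIle
  exact le_of_mul_le_mul_right h hG
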